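/- Let F be a field, let m, n be positive integers, and let g be the F-Lie algebra on F^m × F^n × Mat_{m×n}(F) with bracket [(u, v, A), (u′, v′, A′)] = (0, 0, u (v′)ᵀ − u′ vᵀ). Let ω : g → F be an F-linear map, let B ∈ Mat_{m×n}(F) be the matrix with entries B_{ij} = ω(0, 0, E_{ij}), and let r = rank(B). Then the derived subalgebra [rad(ω), rad(ω)] of the Lie subalgebra rad(ω) = { x ∈ g : ω([x, y]) = 0 for all y ∈ g } has dimension (m − r)(n − r) over F. -/

import Mathlib

open Matrix Module TensorProduct

set_option synthInstance.maxHeartbeats 1000000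
set_option maxHeartbeats 1000000

/-- The underlying module of the 2-nilpotent Lie lattice `𝒢_{m×n}`:
`R^m × R^n × Mat_{m×n}(R)`. -/
abbrev Gmn (R : Type*) [CommRing R] (m n : ℕ) : Type _ :=
  (Fin m → R) × (Fin n → R) × Matrix (Fin m) (Fin n) R

/-- The Lie bracket `[(u, v, A), (u′, v′, A′)] = (0, 0, u (v′)ᵀ − u′ vᵀ)`. -/
instance Gmn.instLieRing (R : Type*) [CommRing R] (m n : ℕ) : LieRing (Gmn R m n) where
  bracket x y := (0, 0, vecMulVec x.1 y.2.1 - vecMulVec y.1 x.2.1)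
  add_lie x y z := by
    refine Prod.ext (by simp) (Prod.ext (by simp) ?_)
    show vecMulVec (x.1 + y.1) z.2.1 - vecMulVec z.1 (x.2.1 + y.2.1) =
      (vecMulVec x.1 z.2.1 - vecMulVec z.1 x.2.1) + (vecMulVec y.1 z.2.1 - vecMulVec z.1 y.2.1)
    ext i j
    simp [vecMulVec]
    ring
  lie_add x y z := by
    refine Prod.ext (by simp) (Prod.ext (by simp) ?_)
    show vecMulVec x.1 (y.2.1 + z.2.1) - vecMulVec (y.1 + z.1) x.2.1 =
      (vecMulVec x.1 y.2.1 - vecMulVec y.1 x.2.1) + (vecMulVec x.1 z.2.1 - vecMulVec z.1 x.2.1)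
    ext i j
    simp [vecMulVec]
    ring
  lie_self x := by
    refine Prod.ext (by simp) (Prod.ext (by simp) ?_)
    show vecMulVec x.1 x.2.1 - vecMulVec x.1 x.2.1 = 0
    simp
  leibniz_lie x y z := by
    refine Prod.ext (by simp) (Prod.ext (by simp) ?_)
    show vecMulVec x.1 (0 : Fin n → R) - vecMulVec (0 : Fin m → R) x.2.1 =
      (vecMulVec (0 : Fin m → R) z.2.1 - vecMulVec z.1 (0 : Fin n → R)) +
        (vecMulVec y.1 (0 : Fin n → R) - vecMulVec (0 : Fin m → R) y.2.1)
    ext i j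
    simp [vecMulVec]

instance Gmn.instLieAlgebra (R : Type*) [CommRing R] (m n : ℕ) :
    LieAlgebra R (Gmn R m n) where
  lie_smul t x y := by
    refine Prod.ext ?_ (Prod.ext ?_ ?_)
    · show (0 : Fin m → R) = t • (0 : Fin m → R); simp
    · show (0 : Fin n → R) = t • (0 : Fin n → R); simp
    show vecMulVec x.1 (t • y.2.1) - vecMulVec (t • y.1) x.2.1 =
      t • (vecMulVec x.1 y.2.1 - vecMulVec y.1 x.2.1)
    ext i j
    simp [vecMulVec]
    ring

/-- The radical of a linear form `ω` on `𝒢_{m×n} ⊗ F`: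
`rad(ω) = { x : ω([x, y]) = 0 for all y }`, as an `F`-subspace. -/
def radSub {F : Type*} [Field F] {m n : ℕ} (ω : Gmn F m n →ₗ[F] F) :
    Submodule F (Gmn F m n) where
  carrier := {x | ∀ y, ω ⁅x, y⁆ = 0}
  add_mem' := by
    intro a b ha hb y
    rw [add_lie, map_add, ha, hb, add_zero]
  zero_mem' := by
    intro y
    rw [zero_lie, map_zero]
  smul_mem' := by
    intro c a ha y
    rw [smul_lie, LinearMap.map_smul, ha, smul_zero]

noncomputable section AuxVMV

variable {F : Type*} [Field F] {m n : ℕ}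

/-- `vecMulVec` as a bilinear map. -/
def vmvBilin (F : Type*) [Field F] (m n : ℕ) :
    (Fin m → F) →ₗ[F] (Fin n → F) →ₗ[F] Matrix (Fin m) (Fin n) F where
  toFun u :=
    { toFun := fun v => vecMulVec u v
      map_add' := by intro v w; ext i j; simp [vecMulVec]; ring
      map_smul' := by intro c v; ext i j; simp [vecMulVec]; ring }
  map_add' := by intro u w; ext v i j; simp [vecMulVec]; ring
  map_smul' := by intro c u; ext v i j; simp [vecMulVec]; ring

/-- The canonical map from the tensor product to matrices. -/
def vmvLift (F : Type*) [Field F] (m n : ℕ) :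
    ((Fin m → F) ⊗[F] (Fin n → F)) →ₗ[F] Matrix (Fin m) (Fin n) F :=
  TensorProduct.lift (vmvBilin F m n)

@[simp] lemma vmvLift_tmul (u : Fin m → F) (v : Fin n → F) :
    vmvLift F m n (u ⊗ₜ[F] v) = vecMulVec u v := rfl

lemma vmvLift_surjective : Function.Surjective (vmvLift F m n) := by
  intro M
  refine ⟨∑ i : Fin m, Pi.single i (1 : F) ⊗ₜ[F] M i, ?_⟩
  rw [map_sum]
  ext k j
  simp [Matrix.sum_apply, vecMulVec_apply, Pi.single_apply, ite_mul]

lemma vmvLift_injective : Function.Injective (vmvLift F m n) := by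
  have h : finrank F ((Fin m → F) ⊗[F] (Fin n → F)) = finrank F (Matrix (Fin m) (Fin n) F) := by
    simp [Module.finrank_matrix]
  exact (LinearMap.injective_iff_surjective_of_finrank_eq_finrank h).2 vmvLift_surjective

lemma finrank_span_vmv (U : Submodule F (Fin m → F)) (V : Submodule F (Fin n → F)) :
    finrank F (Submodule.span F
      {M : Matrix (Fin m) (Fin n) F | ∃ u ∈ U, ∃ v ∈ V, M = vecMulVec u v}) =
      finrank F U * finrank F V := by
  have hset : {M : Matrix (Fin m) (Fin n) F | ∃ u ∈ U, ∃ v ∈ V, M = vecMulVec u v}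
      = vmvLift F m n '' {t | ∃ (u : U) (v : V), (U.subtype u) ⊗ₜ[F] (V.subtype v) = t} := by
    ext M
    constructor
    · rintro ⟨u, hu, v, hv, rfl⟩
      exact ⟨_, ⟨⟨u, hu⟩, ⟨v, hv⟩, rfl⟩, rfl⟩
    · rintro ⟨t, ⟨u, v, rfl⟩, rfl⟩
      exact ⟨u, u.2, v, v.2, rfl⟩
  rw [hset, ← Submodule.map_span, ← TensorProduct.range_map_eq_span_tmul,
    ← LinearMap.range_comp]
  have hinj : Function.Injective ((vmvLift F m n) ∘ₗ TensorProduct.map U.subtype V.subtype) := by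
    have hmap : Function.Injective (TensorProduct.map U.subtype V.subtype) := by
      rw [← LinearMap.lTensor_comp_rTensor]
      exact (Module.Flat.lTensor_preserves_injective_linearMap _ V.injective_subtype).comp
        (Module.Flat.rTensor_preserves_injective_linearMap _ U.injective_subtype)
    exact vmvLift_injective.comp hmap
  rw [LinearMap.finrank_range_of_inj hinj]
  simp

end AuxVMV

noncomputable section AuxRad

variable {F : Type*} [Field F] {m n : ℕ}

/-- The linear injection of the matrix part into `Gmn`. -/
def inj3 (F : Type*) [Field F] (m n : ℕ) :
    Matrix (Fin m) (Fin n) F →ₗ[F] Gmn F m n where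
  toFun M := (0, 0, M)
  map_add' M N := Prod.ext (by simp) (Prod.ext (by simp) (by simp))
  map_smul' c M := Prod.ext (by simp) (Prod.ext (by simp) (by simp))

lemma inj3_injective : Function.Injective (inj3 F m n) :=
  fun _ _ h => congrArg (fun z : Gmn F m n => z.2.2) h

lemma omega_inj3 (ω : Gmn F m n →ₗ[F] F) (B : Matrix (Fin m) (Fin n) F)
    (hB : ∀ i j, B i j = ω (0, 0, Matrix.single i j 1))
    (M : Matrix (Fin m) (Fin n) F) :
    ω (inj3 F m n M) = ∑ i, ∑ j, M i j * B i j := by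
  conv_lhs => rw [matrix_eq_sum_single M]
  rw [map_sum, map_sum]
  refine Finset.sum_congr rfl fun i _ => ?_
  rw [map_sum, map_sum]
  refine Finset.sum_congr rfl fun j _ => ?_
  have h1 : Matrix.single i j (M i j) = M i j • Matrix.single i j (1 : F) := by
    rw [Matrix.smul_single, smul_eq_mul, mul_one]
  rw [h1, LinearMap.map_smul, LinearMap.map_smul, smul_eq_mul, hB i j]
  rfl

lemma omega_bracket (ω : Gmn F m n →ₗ[F] F) (B : Matrix (Fin m) (Fin n) F)
    (hB : ∀ i j, B i j = ω (0, 0, Matrix.single i j 1))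
    (x y : Gmn F m n) :
    ω ⁅x, y⁆ = (Bᵀ *ᵥ x.1) ⬝ᵥ y.2.1 - (B *ᵥ x.2.1) ⬝ᵥ y.1 := by
  have hbr : ⁅x, y⁆ = inj3 F m n (vecMulVec x.1 y.2.1 - vecMulVec y.1 x.2.1) := rfl
  rw [hbr, omega_inj3 ω B hB]
  have h1 : ∑ i, ∑ j, x.1 i * y.2.1 j * B i j = (Bᵀ *ᵥ x.1) ⬝ᵥ y.2.1 := by
    rw [Finset.sum_comm]
    simp only [dotProduct, Matrix.mulVec, Matrix.transpose_apply, Finset.sum_mul]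
    exact Finset.sum_congr rfl fun j _ => Finset.sum_congr rfl fun i _ => by ring
  have h2 : ∑ i, ∑ j, y.1 i * x.2.1 j * B i j = (B *ᵥ x.2.1) ⬝ᵥ y.1 := by
    simp only [dotProduct, Matrix.mulVec, Finset.sum_mul]
    exact Finset.sum_congr rfl fun i _ => Finset.sum_congr rfl fun j _ => by ring
  rw [← h1, ← h2, ← Finset.sum_sub_distrib]
  refine Finset.sum_congr rfl fun i _ => ?_
  rw [← Finset.sum_sub_distrib]
  refine Finset.sum_congr rfl fun j _ => ?_
  simp [vecMulVec_apply]
  ring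

lemma mem_radSub_iff (ω : Gmn F m n →ₗ[F] F) (B : Matrix (Fin m) (Fin n) F)
    (hB : ∀ i j, B i j = ω (0, 0, Matrix.single i j 1))
    (x : Gmn F m n) :
    x ∈ radSub ω ↔ Bᵀ *ᵥ x.1 = 0 ∧ B *ᵥ x.2.1 = 0 := by
  have hmem : x ∈ radSub ω ↔ ∀ y, ω ⁅x, y⁆ = 0 := Iff.rfl
  rw [hmem]
  constructor
  · intro hx
    constructor
    · funext j
      have h := hx (0, Pi.single j 1, 0)
      rw [omega_bracket ω B hB] at h
      simpa using h
    · funext i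
      have h := hx (Pi.single i 1, 0, 0)
      rw [omega_bracket ω B hB] at h
      simpa [neg_eq_zero] using h
  · rintro ⟨h1, h2⟩ y
    rw [omega_bracket ω B hB, h1, h2]
    simp

end AuxRad


/-- The derived subalgebra `[rad(ω), rad(ω)]` (the span of all brackets of elements of
`rad(ω)`) has dimension `(m − r)(n − r)`, where `r` is the rank of the matrix
`B = (ω(z_{ij}))_{ij}`. -/
theorem derived_rad_omega_gmn (F : Type*) [Field F] (m n : ℕ) (hm : 1 ≤ m) (hn : 1 ≤ n)
    (ω : Gmn F m n →ₗ[F] F)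
    (B : Matrix (Fin m) (Fin n) F)
    (hB : ∀ i j, B i j = ω (0, 0, Matrix.single i j 1)) :
    Module.finrank F
      (Submodule.span F {z : Gmn F m n | ∃ x ∈ radSub ω, ∃ y ∈ radSub ω, z = ⁅x, y⁆}) =
    (m - B.rank) * (n - B.rank) := by
  classical
  set U := LinearMap.ker (Bᵀ).mulVecLin with hUdef
  set V := LinearMap.ker B.mulVecLin with hVdef
  have hrkU : finrank F U = m - B.rank := by
    rw [hUdef]
    have h := LinearMap.finrank_range_add_finrank_ker (Bᵀ).mulVecLin
    have h2 : finrank F (LinearMap.range (Bᵀ).mulVecLin) = B.rank := by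
      rw [← Matrix.rank_transpose B]; rfl
    rw [h2, Module.finrank_fin_fun] at h
    omega
  have hrkV : finrank F V = n - B.rank := by
    rw [hVdef]
    have h := LinearMap.finrank_range_add_finrank_ker B.mulVecLin
    have h2 : finrank F (LinearMap.range B.mulVecLin) = B.rank := rfl
    rw [h2, Module.finrank_fin_fun] at h
    omega
  have hmemU : ∀ x : Gmn F m n, x ∈ radSub ω ↔ x.1 ∈ U ∧ x.2.1 ∈ V := by
    intro x
    rw [mem_radSub_iff ω B hB, hUdef, hVdef, LinearMap.mem_ker, LinearMap.mem_ker,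
      Matrix.mulVecLin_apply, Matrix.mulVecLin_apply]
  set T : Set (Matrix (Fin m) (Fin n) F) :=
    {M | ∃ u ∈ U, ∃ v ∈ V, M = vecMulVec u v} with hTdef
  have hspan : Submodule.span F {z : Gmn F m n | ∃ x ∈ radSub ω, ∃ y ∈ radSub ω, z = ⁅x, y⁆}
      = Submodule.map (inj3 F m n) (Submodule.span F T) := by
    apply le_antisymm
    · rw [Submodule.span_le]
      rintro z ⟨x, hx, y, hy, rfl⟩
      have hbr : ⁅x, y⁆ = inj3 F m n (vecMulVec x.1 y.2.1 - vecMulVec y.1 x.2.1) := rfl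
      rw [hbr]
      refine Submodule.mem_map_of_mem (sub_mem ?_ ?_)
      · exact Submodule.subset_span ⟨x.1, ((hmemU x).1 hx).1, y.2.1, ((hmemU y).1 hy).2, rfl⟩
      · exact Submodule.subset_span ⟨y.1, ((hmemU y).1 hy).1, x.2.1, ((hmemU x).1 hx).2, rfl⟩
    · rw [Submodule.map_span, Submodule.span_le]
      rintro z ⟨M, ⟨u, hu, v, hv, rfl⟩, rfl⟩
      apply Submodule.subset_span
      refine ⟨(u, 0, 0), ?_, (0, v, 0), ?_, ?_⟩
      · exact (hmemU _).2 ⟨hu, by simp [hVdef]⟩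
      · exact (hmemU _).2 ⟨by simp [hUdef], hv⟩
      · have : ⁅((u, 0, 0) : Gmn F m n), ((0, v, 0) : Gmn F m n)⁆
            = inj3 F m n (vecMulVec u v - vecMulVec 0 0) := rfl
        rw [this]
        congr 1
        ext i j
        simp [vecMulVec_apply]
  rw [hspan, ← LinearEquiv.finrank_eq
    (Submodule.equivMapOfInjective (inj3 F m n) inj3_injective (Submodule.span F T)),
    finrank_span_vmv U V, hrkU, hrkV]
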